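/- arXiv:1110.3760 — 2 statements merged into one kernel-verified Lean document; each statement's English description precedes it below -/
import Mathlib

section
/- Fix ε > 0. There is a constant C = C(ε) > 0 such that for any 2n-vertex d-regular bipartite graph G, the sequence {i_t(G)}_{t≥0} is s-step monotone increasing on [0, (1−ε)n/2] and s-step monotone decreasing on [(1+ε)n/2, n], where s = C·max{log n, n/d}. -/
open Finset

/-- Number of independent sets of size `t` in `G`. -/
def numIndep {V : Type*} [Fintype V] [DecidableEq V] (G : SimpleGraph V)
    [DecidableRel G.Adj] (t : ℕ) : ℕ :=
  (Finset.univ.powerset.filter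
    (fun s : Finset V => s.card = t ∧ ∀ u ∈ s, ∀ v ∈ s, ¬ G.Adj u v)).card

namespace Stmt6Aux

variable {ι : Type*} [DecidableEq ι]


noncomputable def mu (w₀ w₁ : ι → NNReal) (u S : Finset ι) : NNReal :=
  (∏ i ∈ S, w₁ i) * ∏ i ∈ u \ S, w₀ i

lemma mu_total (w₀ w₁ : ι → NNReal) (hw : ∀ i, w₀ i + w₁ i = 1) (u : Finset ι) :
    ∑ S ∈ u.powerset, mu w₀ w₁ u S = 1 := by
  have h := Finset.prod_add w₁ w₀ u
  have h2 : ∏ i ∈ u, (w₁ i + w₀ i) = 1 := by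
    rw [Finset.prod_congr rfl (fun i _ => by rw [add_comm, hw i]), Finset.prod_const_one]
  unfold mu
  rw [← h2, h]

/-- mass of the event `S ∩ T = ∅`. -/
lemma mu_disjoint_sum (w₀ w₁ : ι → NNReal) (hw : ∀ i, w₀ i + w₁ i = 1) (u T : Finset ι)
    (hT : T ⊆ u) :
    ∑ S ∈ u.powerset.filter (fun S => S ∩ T = ∅), mu w₀ w₁ u S = ∏ i ∈ T, w₀ i := by
  have hfil : u.powerset.filter (fun S => S ∩ T = ∅) = (u \ T).powerset := by
    ext S
    simp only [mem_filter, mem_powerset, subset_sdiff]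
    constructor
    · rintro ⟨h1, h2⟩
      exact ⟨h1, disjoint_left.2 fun x hx hx2 => by
        have : x ∈ S ∩ T := mem_inter.2 ⟨hx, hx2⟩
        simp [h2] at this⟩
    · rintro ⟨h1, h2⟩
      refine ⟨h1, ?_⟩
      ext x
      simp only [mem_inter, notMem_empty, iff_false, not_and]
      exact fun hx hx2 => disjoint_left.1 h2 hx hx2
  rw [hfil]
  have key : ∀ S ∈ (u \ T).powerset, mu w₀ w₁ u S = (∏ i ∈ T, w₀ i) * mu w₀ w₁ (u \ T) S := by
    intro S hS
    rw [mem_powerset] at hS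
    have husplit : u \ S = T ∪ ((u \ T) \ S) := by
      ext x
      simp only [mem_sdiff, mem_union]
      constructor
      · rintro ⟨h1, h2⟩
        by_cases hxT : x ∈ T
        · exact Or.inl hxT
        · exact Or.inr ⟨⟨h1, hxT⟩, h2⟩
      · rintro (h1 | ⟨⟨h1, _⟩, h2⟩)
        · exact ⟨hT h1, fun hxS => by
            have := hS hxS
            exact (mem_sdiff.1 this).2 h1⟩
        · exact ⟨h1, h2⟩
    have hdisj : Disjoint T ((u \ T) \ S) := by
      refine disjoint_left.2 fun x hx hx2 => ?_
      exact (mem_sdiff.1 (mem_sdiff.1 hx2).1).2 hx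
    unfold mu
    rw [husplit, Finset.prod_union hdisj]
    ring
  rw [Finset.sum_congr rfl key, ← Finset.mul_sum, mu_total w₀ w₁ hw (u \ T), mul_one]

lemma mu_insert_notmem (w₀ w₁ : ι → NNReal) {u : Finset ι} {a : ι} (ha : a ∉ u)
    {S : Finset ι} (hS : S ⊆ u) :
    mu w₀ w₁ (insert a u) S = w₀ a * mu w₀ w₁ u S := by
  have haS : a ∉ S := fun h => ha (hS h)
  have : (insert a u) \ S = insert a (u \ S) := by
    ext x; simp only [mem_sdiff, mem_insert]
    constructor
    · rintro ⟨h1 | h1, h2⟩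
      · exact Or.inl h1
      · exact Or.inr ⟨h1, h2⟩
    · rintro (rfl | ⟨h1, h2⟩)
      · exact ⟨Or.inl rfl, haS⟩
      · exact ⟨Or.inr h1, h2⟩
  rw [mu, mu, this, Finset.prod_insert (fun h => ha (mem_sdiff.1 h).1)]
  ring

lemma mu_insert_mem (w₀ w₁ : ι → NNReal) {u : Finset ι} {a : ι} (ha : a ∉ u)
    {S : Finset ι} (hS : S ⊆ u) :
    mu w₀ w₁ (insert a u) (insert a S) = w₁ a * mu w₀ w₁ u S := by
  have haS : a ∉ S := fun h => ha (hS h)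
  have : (insert a u) \ (insert a S) = u \ S := by
    ext x; simp only [mem_sdiff, mem_insert, not_or]
    constructor
    · rintro ⟨h1 | h1, h2, h3⟩
      · exact absurd h1 h2
      · exact ⟨h1, h3⟩
    · rintro ⟨h1, h2⟩
      exact ⟨Or.inr h1, fun h => ha (h ▸ h1), h2⟩
  rw [mu, mu, this, Finset.prod_insert haS]
  ring

/-- padded AM-GM: geometric mean with weights 1/d over at most d terms. -/
lemma amgm_padded {κ : Type*} [DecidableEq κ] (d : ℕ) (hd : 0 < d)
    (m : Finset κ) (hm : m.card ≤ d) (z : κ → NNReal) :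
    (∏ k ∈ m, z k ^ ((d : ℝ)⁻¹)) ≤
      (1 - (m.card : NNReal) * (d : NNReal)⁻¹) + ∑ k ∈ m, (d : NNReal)⁻¹ * z k := by
  classical
  have hdnn : ((d : NNReal)) ≠ 0 := by positivity
  have hc : (m.card : NNReal) * (d : NNReal)⁻¹ ≤ 1 := by
    rw [← mul_le_mul_iff_of_pos_right (by positivity : (0:NNReal) < (d : NNReal)), one_mul,
      mul_assoc, inv_mul_cancel₀ hdnn, mul_one]
    exact_mod_cast hm
  set c : NNReal := (m.card : NNReal) * (d : NNReal)⁻¹ with hcdef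
  -- index over Option κ
  set s' : Finset (Option κ) := insert none (m.image some) with hs'
  have hnone : (none : Option κ) ∉ m.image some := by simp
  set w : Option κ → NNReal := fun o => o.elim (1 - c) (fun _ => (d : NNReal)⁻¹) with hwdef
  set z' : Option κ → NNReal := fun o => o.elim 1 z with hz'def
  have hsum : ∑ o ∈ s', w o = 1 := by
    rw [hs', Finset.sum_insert hnone, Finset.sum_image (by simp)]
    simp only [hwdef, Option.elim]
    rw [Finset.sum_const, nsmul_eq_mul]
    rw [show ((m.card : NNReal) * (d : NNReal)⁻¹) = c from rfl]
    exact tsub_add_cancel_of_le hc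
  have := NNReal.geom_mean_le_arith_mean_weighted s' w z' hsum
  rw [hs', Finset.prod_insert hnone, Finset.sum_insert hnone,
    Finset.prod_image (by simp), Finset.sum_image (by simp)] at this
  simp only [hwdef, hz'def, Option.elim, NNReal.rpow_natCast, NNReal.one_rpow, mul_one, one_mul] at this
  calc (∏ k ∈ m, z k ^ ((d : ℝ)⁻¹))
      = ∏ k ∈ m, z k ^ (((d : NNReal)⁻¹ : NNReal) : ℝ) := by
        apply Finset.prod_congr rfl; intro k _; norm_num
    _ ≤ (1 - c) + ∑ k ∈ m, (d : NNReal)⁻¹ * z k := this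
  done

lemma holder_two_point {κ : Type*} [DecidableEq κ] (d : ℕ) (hd : 0 < d)
    (w₀ w₁ : NNReal) (hw : w₀ + w₁ = 1) (m : Finset κ) (hm : m.card ≤ d)
    (x y : κ → NNReal) :
    w₀ * ∏ k ∈ m, x k + w₁ * ∏ k ∈ m, y k ≤
      ∏ k ∈ m, (w₀ * x k ^ d + w₁ * y k ^ d) ^ ((d : ℝ)⁻¹) := by
  classical
  set T : κ → NNReal := fun k => w₀ * x k ^ d + w₁ * y k ^ d with hTdef
  by_cases hzero : ∃ k ∈ m, T k = 0
  · obtain ⟨k0, hk0m, hk0⟩ := hzero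
    have hrhs : (∏ k ∈ m, (T k) ^ ((d : ℝ)⁻¹)) = 0 := by
      apply Finset.prod_eq_zero hk0m
      rw [hk0, NNReal.zero_rpow (by positivity)]
    rw [hrhs]
    have h1 : w₀ * x k0 ^ d = 0 ∧ w₁ * y k0 ^ d = 0 := add_eq_zero.1 hk0
    have hx0 : w₀ * ∏ k ∈ m, x k = 0 := by
      rcases mul_eq_zero.1 h1.1 with h | h
      · rw [h, zero_mul]
      · rw [Finset.prod_eq_zero hk0m (pow_eq_zero_iff hd.ne' |>.1 h), mul_zero]
    have hy0 : w₁ * ∏ k ∈ m, y k = 0 := by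
      rcases mul_eq_zero.1 h1.2 with h | h
      · rw [h, zero_mul]
      · rw [Finset.prod_eq_zero hk0m (pow_eq_zero_iff hd.ne' |>.1 h), mul_zero]
    rw [hx0, hy0, add_zero]
  · push_neg at hzero
    have hTne : ∀ k ∈ m, T k ≠ 0 := hzero
    set P : NNReal := ∏ k ∈ m, (T k) ^ ((d : ℝ)⁻¹) with hPdef
    have key : ∀ (f : κ → NNReal), (∏ k ∈ m, f k) =
        (∏ k ∈ m, (f k ^ d / T k) ^ ((d : ℝ)⁻¹)) * P := by
      intro f
      rw [hPdef, ← Finset.prod_mul_distrib]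
      apply Finset.prod_congr rfl
      intro k hk
      rw [← NNReal.mul_rpow, div_mul_cancel₀ _ (hTne k hk),
        NNReal.pow_rpow_inv_natCast _ hd.ne']
    have hax := amgm_padded d hd m hm (fun k => x k ^ d / T k)
    have hay := amgm_padded d hd m hm (fun k => y k ^ d / T k)
    set c : NNReal := (m.card : NNReal) * (d : NNReal)⁻¹ with hcdef
    have hc : c ≤ 1 := by
      rw [hcdef, ← mul_le_mul_iff_of_pos_right (by positivity : (0:NNReal) < (d : NNReal)), one_mul,
        mul_assoc, inv_mul_cancel₀ (by positivity : (d:NNReal) ≠ 0), mul_one]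
      exact_mod_cast hm
    have hcombine :
        w₀ * ((1 - c) + ∑ k ∈ m, (d : NNReal)⁻¹ * (x k ^ d / T k)) +
        w₁ * ((1 - c) + ∑ k ∈ m, (d : NNReal)⁻¹ * (y k ^ d / T k)) = 1 := by
      have hone : ∀ k ∈ m, w₀ * ((d : NNReal)⁻¹ * (x k ^ d / T k)) +
          w₁ * ((d : NNReal)⁻¹ * (y k ^ d / T k)) = (d : NNReal)⁻¹ := by
        intro k hk
        have : w₀ * (x k ^ d / T k) + w₁ * (y k ^ d / T k) = 1 := by
          rw [mul_div_assoc', mul_div_assoc', ← add_div, div_eq_one_iff_eq (hTne k hk)]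
        calc w₀ * ((d : NNReal)⁻¹ * (x k ^ d / T k)) + w₁ * ((d : NNReal)⁻¹ * (y k ^ d / T k))
            = (d : NNReal)⁻¹ * (w₀ * (x k ^ d / T k) + w₁ * (y k ^ d / T k)) := by ring
          _ = (d : NNReal)⁻¹ := by rw [this, mul_one]
      rw [mul_add, mul_add, Finset.mul_sum, Finset.mul_sum]
      have : w₀ * (1 - c) + w₁ * (1 - c) = 1 - c := by
        rw [← add_mul, hw, one_mul]
      calc w₀ * (1 - c) + ∑ k ∈ m, w₀ * ((d : NNReal)⁻¹ * (x k ^ d / T k)) +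
            (w₁ * (1 - c) + ∑ k ∈ m, w₁ * ((d : NNReal)⁻¹ * (y k ^ d / T k)))
          = (w₀ * (1 - c) + w₁ * (1 - c)) +
            ∑ k ∈ m, (w₀ * ((d : NNReal)⁻¹ * (x k ^ d / T k)) +
              w₁ * ((d : NNReal)⁻¹ * (y k ^ d / T k))) := by
            rw [Finset.sum_add_distrib]; ring
        _ = (1 - c) + ∑ k ∈ m, (d : NNReal)⁻¹ := by
            rw [this, Finset.sum_congr rfl hone]
        _ = (1 - c) + c := by
            rw [Finset.sum_const, nsmul_eq_mul, hcdef]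
        _ = 1 := tsub_add_cancel_of_le hc
    calc w₀ * ∏ k ∈ m, x k + w₁ * ∏ k ∈ m, y k
        = (w₀ * (∏ k ∈ m, (x k ^ d / T k) ^ ((d : ℝ)⁻¹)) +
           w₁ * (∏ k ∈ m, (y k ^ d / T k) ^ ((d : ℝ)⁻¹))) * P := by
          rw [key x, key y]; ring
      _ ≤ (w₀ * ((1 - c) + ∑ k ∈ m, (d : NNReal)⁻¹ * (x k ^ d / T k)) +
           w₁ * ((1 - c) + ∑ k ∈ m, (d : NNReal)⁻¹ * (y k ^ d / T k))) * P := by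
          apply mul_le_mul_left
          exact add_le_add (mul_le_mul_right hax _) (mul_le_mul_right hay _)
      _ = P := by rw [hcombine, one_mul]

lemma finner {κ : Type*} [Fintype κ] [DecidableEq κ] (d : ℕ) (hd : 0 < d)
    (w₀ w₁ : ι → NNReal) (hw : ∀ i, w₀ i + w₁ i = 1) (u : Finset ι) :
    ∀ (F : κ → Finset ι → NNReal) (D : κ → Finset ι),
      (∀ k, D k ⊆ u) →
      (∀ k S, S ⊆ u → F k (S ∩ D k) = F k S) →
      (∀ i, (Finset.univ.filter fun k => i ∈ D k).card ≤ d) →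
      ∑ S ∈ u.powerset, mu w₀ w₁ u S * ∏ k, F k S ≤
        ∏ k, (∑ S ∈ u.powerset, mu w₀ w₁ u S * (F k S) ^ d) ^ ((d : ℝ)⁻¹) := by
  induction u using Finset.induction_on with
  | empty =>
    intro F D hD hdep hcov
    rw [Finset.powerset_empty]
    simp only [Finset.sum_singleton]
    have hmu : mu w₀ w₁ ∅ ∅ = 1 := by simp [mu]
    rw [hmu, one_mul]
    apply le_of_eq
    apply Finset.prod_congr rfl
    intro k _
    rw [one_mul, NNReal.pow_rpow_inv_natCast _ hd.ne']
  | @insert a u' ha ih =>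
    intro F D hD hdep hcov
    set m : Finset κ := Finset.univ.filter (fun k => a ∈ D k) with hmdef
    have hmcard : m.card ≤ d := hcov a
    set F' : κ → Finset ι → NNReal := fun k S =>
      if a ∈ D k then (w₀ a * (F k S) ^ d + w₁ a * (F k (insert a S)) ^ d) ^ ((d:ℝ)⁻¹)
      else F k S with hF'def
    set D' : κ → Finset ι := fun k => (D k).erase a with hD'def
    -- basic facts
    have hsub' : ∀ {S : Finset ι}, S ⊆ u' → S ⊆ insert a u' :=
      fun hS => hS.trans (Finset.subset_insert a u')
    have hsubins : ∀ {S : Finset ι}, S ⊆ u' → insert a S ⊆ insert a u' :=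
      fun hS => Finset.insert_subset_insert a hS
    have fact0 : ∀ k (S : Finset ι), S ⊆ u' → a ∉ D k → F k (insert a S) = F k S := by
      intro k S hS hk
      have h1 : (insert a S) ∩ D k = S ∩ D k := by
        ext x
        simp only [Finset.mem_inter, Finset.mem_insert]
        constructor
        · rintro ⟨rfl | hx, hx2⟩
          · exact absurd hx2 hk
          · exact ⟨hx, hx2⟩
        · rintro ⟨hx, hx2⟩; exact ⟨Or.inr hx, hx2⟩
      rw [← hdep k (insert a S) (hsubins hS), h1, hdep k S (hsub' hS)]
    have factInter : ∀ k (S : Finset ι), S ⊆ u' → a ∈ D k →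
        F k (insert a (S ∩ D k)) = F k (insert a S) := by
      intro k S hS hk
      have h1 : (insert a S) ∩ D k = insert a (S ∩ D k) := by
        ext x
        simp only [Finset.mem_inter, Finset.mem_insert]
        constructor
        · rintro ⟨rfl | hx, hx2⟩
          · exact Or.inl rfl
          · exact Or.inr ⟨hx, hx2⟩
        · rintro (rfl | ⟨hx, hx2⟩)
          · exact ⟨Or.inl rfl, hk⟩
          · exact ⟨Or.inr hx, hx2⟩
      rw [← hdep k (insert a S) (hsubins hS), h1]
    have factIntD' : ∀ k (S : Finset ι), S ⊆ u' → S ∩ D' k = S ∩ D k := by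
      intro k S hS
      have haS : a ∉ S := fun h => ha (hS h)
      ext x
      simp only [hD'def, Finset.mem_inter, Finset.mem_erase]
      constructor
      · rintro ⟨hx, _, hx2⟩; exact ⟨hx, hx2⟩
      · rintro ⟨hx, hx2⟩; exact ⟨hx, fun h => haS (h ▸ hx), hx2⟩
    -- pointwise Hölder step
    have hpoint : ∀ S : Finset ι, S ⊆ u' →
        w₀ a * ∏ k, F k S + w₁ a * ∏ k, F k (insert a S) ≤ ∏ k, F' k S := by
      intro S hS
      have hsplitx : ∏ k, F k S = (∏ k ∈ m, F k S) * ∏ k ∈ Finset.univ.filter (fun k => ¬ a ∈ D k), F k S := by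
        rw [Finset.prod_filter_mul_prod_filter_not]
      have hsplity : ∏ k, F k (insert a S) =
          (∏ k ∈ m, F k (insert a S)) * ∏ k ∈ Finset.univ.filter (fun k => ¬ a ∈ D k), F k S := by
        rw [← Finset.prod_filter_mul_prod_filter_not Finset.univ (fun k => a ∈ D k)]
        congr 1
        apply Finset.prod_congr rfl
        intro k hk
        exact fact0 k S hS (Finset.mem_filter.1 hk).2
      have hsplitF' : ∏ k, F' k S =
          (∏ k ∈ m, (w₀ a * (F k S) ^ d + w₁ a * (F k (insert a S)) ^ d) ^ ((d:ℝ)⁻¹)) *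
          ∏ k ∈ Finset.univ.filter (fun k => ¬ a ∈ D k), F k S := by
        rw [← Finset.prod_filter_mul_prod_filter_not Finset.univ (fun k => a ∈ D k)]
        congr 1
        · apply Finset.prod_congr rfl
          intro k hk
          simp only [hF'def, if_pos (Finset.mem_filter.1 hk).2]
        · apply Finset.prod_congr rfl
          intro k hk
          simp only [hF'def, if_neg (Finset.mem_filter.1 hk).2]
      rw [hsplitx, hsplity, hsplitF', ← mul_assoc, ← mul_assoc, ← add_mul]
      apply mul_le_mul_left
      exact holder_two_point d hd (w₀ a) (w₁ a) (hw a) m hmcard _ _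
    -- apply IH to F' D'
    have hD'sub : ∀ k, D' k ⊆ u' := by
      intro k x hx
      have hx' := Finset.mem_erase.1 hx
      rcases Finset.mem_insert.1 (hD k hx'.2) with h | h
      · exact absurd h hx'.1
      · exact h
    have hdep' : ∀ k S, S ⊆ u' → F' k (S ∩ D' k) = F' k S := by
      intro k S hS
      by_cases hk : a ∈ D k
      · simp only [hF'def, if_pos hk]
        rw [factIntD' k S hS]
        have e1 : F k (S ∩ D k) = F k S := hdep k S (hsub' hS)
        have e2 : F k (insert a (S ∩ D k)) = F k (insert a S) := factInter k S hS hk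
        rw [e1, e2]
      · simp only [hF'def, if_neg hk]
        rw [factIntD' k S hS, hdep k S (hsub' hS)]
    have hcov' : ∀ i, (Finset.univ.filter fun k => i ∈ D' k).card ≤ d := by
      intro i
      refine le_trans (Finset.card_le_card ?_) (hcov i)
      intro k hk
      simp only [Finset.mem_filter] at *
      exact ⟨hk.1, (Finset.mem_erase.1 hk.2).2⟩
    have hIH := ih F' D' hD'sub hdep' hcov'
    -- marginal identity for RHS
    have hmarg : ∀ k, ∑ S ∈ u'.powerset, mu w₀ w₁ u' S * (F' k S) ^ d =
        ∑ S ∈ (insert a u').powerset, mu w₀ w₁ (insert a u') S * (F k S) ^ d := by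
      intro k
      rw [Finset.sum_powerset_insert ha]
      rw [← Finset.sum_add_distrib]
      apply Finset.sum_congr rfl
      intro S hS
      have hS' := Finset.mem_powerset.1 hS
      rw [mu_insert_notmem w₀ w₁ ha hS', mu_insert_mem w₀ w₁ ha hS']
      by_cases hk : a ∈ D k
      · simp only [hF'def, if_pos hk]
        rw [NNReal.rpow_inv_natCast_pow _ hd.ne']
        ring
      · simp only [hF'def, if_neg hk]
        rw [fact0 k S hS' hk]
        have : w₀ a * mu w₀ w₁ u' S * F k S ^ d + w₁ a * mu w₀ w₁ u' S * F k S ^ d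
            = (w₀ a + w₁ a) * (mu w₀ w₁ u' S * F k S ^ d) := by ring
        rw [this, hw a, one_mul]
    -- assemble
    calc ∑ S ∈ (insert a u').powerset, mu w₀ w₁ (insert a u') S * ∏ k, F k S
        = ∑ S ∈ u'.powerset, (w₀ a * mu w₀ w₁ u' S * ∏ k, F k S
            + w₁ a * mu w₀ w₁ u' S * ∏ k, F k (insert a S)) := by
          rw [Finset.sum_powerset_insert ha, ← Finset.sum_add_distrib]
          apply Finset.sum_congr rfl
          intro S hS
          have hS' := Finset.mem_powerset.1 hS
          rw [mu_insert_notmem w₀ w₁ ha hS', mu_insert_mem w₀ w₁ ha hS']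
      _ ≤ ∑ S ∈ u'.powerset, mu w₀ w₁ u' S * ∏ k, F' k S := by
          apply Finset.sum_le_sum
          intro S hS
          have hS' := Finset.mem_powerset.1 hS
          calc w₀ a * mu w₀ w₁ u' S * ∏ k, F k S + w₁ a * mu w₀ w₁ u' S * ∏ k, F k (insert a S)
              = mu w₀ w₁ u' S * (w₀ a * ∏ k, F k S + w₁ a * ∏ k, F k (insert a S)) := by ring
            _ ≤ mu w₀ w₁ u' S * ∏ k, F' k S := mul_le_mul_right (hpoint S hS') _
      _ ≤ ∏ k, (∑ S ∈ u'.powerset, mu w₀ w₁ u' S * (F' k S) ^ d) ^ ((d : ℝ)⁻¹) := hIH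
      _ = ∏ k, (∑ S ∈ (insert a u').powerset, mu w₀ w₁ (insert a u') S * (F k S) ^ d) ^ ((d : ℝ)⁻¹) := by
          apply Finset.prod_congr rfl
          intro k _
          rw [hmarg k]

lemma sum_pow_card (ν : NNReal) (s : Finset ι) :
    ∑ T ∈ s.powerset, ν ^ T.card = (1 + ν) ^ s.card := by
  have h := Finset.prod_add (fun _ : ι => ν) (fun _ : ι => 1) s
  simp only [Finset.prod_const, one_pow, mul_one] at h
  rw [add_comm, ← h]

lemma kahn {V : Type*} [Fintype V] [DecidableEq V] (G : SimpleGraph V) [DecidableRel G.Adj]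
    (d : ℕ) (hd : 0 < d) (A : Finset V) (hreg : G.IsRegularOfDegree d)
    (hbip : ∀ u v : V, G.Adj u v → (u ∈ A ↔ v ∉ A)) (ν : NNReal) :
    ∑ S ∈ Finset.univ.powerset.filter (fun s : Finset V => ∀ u ∈ s, ∀ v ∈ s, ¬ G.Adj u v),
        ν ^ S.card
      ≤ (1 + ν) ^ A.card * 2 ^ (((Aᶜ : Finset V).card : ℝ) / d) := by
  classical
  set B : Finset V := Aᶜ with hBdef
  have hmemB : ∀ v : V, v ∈ B ↔ v ∉ A := by intro v; simp [hBdef]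
  have hNB : ∀ v ∈ B, G.neighborFinset v ⊆ A := by
    intro v hv x hx
    rw [SimpleGraph.mem_neighborFinset] at hx
    have := hbip v x hx
    by_contra hxA
    exact ((hmemB v).1 hv) (this.2 hxA)
  have hNA : ∀ u ∈ A, G.neighborFinset u ⊆ B := by
    intro u hu x hx
    rw [SimpleGraph.mem_neighborFinset] at hx
    rw [hmemB]
    exact (hbip u x hx).1 hu
  have hdeg : ∀ v : V, (G.neighborFinset v).card = d := fun v => hreg v
  -- weights
  have h1ν : (1 + ν) ≠ 0 := by positivity
  set w₀ : V → NNReal := fun _ => (1 + ν)⁻¹ with hw₀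
  set w₁ : V → NNReal := fun _ => ν * (1 + ν)⁻¹ with hw₁
  have hw : ∀ i : V, w₀ i + w₁ i = 1 := by
    intro i
    rw [hw₀, hw₁]
    field_simp
  -- mu formula
  have hmuA : ∀ SA ∈ A.powerset, (1 + ν) ^ A.card * mu w₀ w₁ A SA = ν ^ SA.card := by
    intro SA hSA
    rw [Finset.mem_powerset] at hSA
    have hcard : SA.card + (A \ SA).card = A.card := by
      rw [Finset.card_sdiff_of_subset hSA]
      exact Nat.add_sub_cancel' (Finset.card_le_card hSA)
    unfold mu
    rw [hw₀, hw₁]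
    simp only [Finset.prod_const]
    rw [mul_pow]
    calc (1 + ν) ^ A.card * (ν ^ SA.card * ((1 + ν)⁻¹) ^ SA.card * ((1 + ν)⁻¹) ^ (A \ SA).card)
        = ν ^ SA.card * ((1 + ν) ^ A.card * ((1 + ν)⁻¹) ^ (SA.card + (A \ SA).card)) := by
          rw [pow_add]; ring
      _ = ν ^ SA.card := by
          rw [hcard, ← mul_pow, mul_inv_cancel₀ h1ν, one_pow, mul_one]
  -- the functions
  set f : V → Finset V → NNReal := fun v S =>
    if S ∩ G.neighborFinset v = ∅ then 1 + ν else 1 with hfdef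
  set F : V → Finset V → NNReal := fun k S => if k ∈ B then f k S else 1 with hFdef
  set D : V → Finset V := fun k => if k ∈ B then G.neighborFinset k else ∅ with hDdef
  -- Z representation
  set Good : Finset V → Finset V := fun SA =>
    B.filter (fun v => SA ∩ G.neighborFinset v = ∅) with hGooddef
  have hZrep : ∑ S ∈ Finset.univ.powerset.filter
        (fun s : Finset V => ∀ u ∈ s, ∀ v ∈ s, ¬ G.Adj u v), ν ^ S.card
      = ∑ SA ∈ A.powerset, ν ^ SA.card * ∏ v ∈ B, f v SA := by
    have hinner : ∀ SA : Finset V, ∏ v ∈ B, f v SA = ∑ SB ∈ (Good SA).powerset, ν ^ SB.card := by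
      intro SA
      rw [sum_pow_card]
      rw [hGooddef]
      rw [← Finset.prod_filter_mul_prod_filter_not B (fun v => SA ∩ G.neighborFinset v = ∅)]
      have e1 : ∏ v ∈ B.filter (fun v => SA ∩ G.neighborFinset v = ∅), f v SA
          = (1 + ν) ^ (B.filter (fun v => SA ∩ G.neighborFinset v = ∅)).card := by
        rw [← Finset.prod_const]
        apply Finset.prod_congr rfl
        intro v hv
        rw [hfdef]
        exact if_pos (Finset.mem_filter.1 hv).2
      have e2 : ∏ v ∈ B.filter (fun v => ¬ SA ∩ G.neighborFinset v = ∅), f v SA = 1 := by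
        apply Finset.prod_eq_one
        intro v hv
        rw [hfdef]
        exact if_neg (Finset.mem_filter.1 hv).2
      rw [e1, e2, mul_one]
    have hstep : ∀ SA : Finset V, ν ^ SA.card * ∏ v ∈ B, f v SA
        = ∑ SB ∈ (Good SA).powerset, ν ^ (SA.card + SB.card) := by
      intro SA
      rw [hinner SA, Finset.mul_sum]
      exact Finset.sum_congr rfl (fun SB _ => (pow_add ν _ _).symm)
    rw [Finset.sum_congr rfl (fun SA _ => hstep SA), Finset.sum_sigma']
    refine (Finset.sum_nbij' (i := fun p => p.1 ∪ p.2)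
      (j := fun S => (⟨S ∩ A, S \ A⟩ : (_ : Finset V) × Finset V)) ?_ ?_ ?_ ?_ ?_).symm
    · rintro ⟨SA, SB⟩ hp
      simp only [Finset.mem_sigma, Finset.mem_powerset] at hp
      obtain ⟨hSA, hSB⟩ := hp
      rw [Finset.mem_filter, Finset.mem_powerset]
      have hSBB : SB ⊆ B := hSB.trans (Finset.filter_subset _ _)
      refine ⟨Finset.subset_univ _, ?_⟩
      intro u hu v hv hadj
      rcases Finset.mem_union.1 hu with hu' | hu' <;> rcases Finset.mem_union.1 hv with hv' | hv'
      · exact ((hbip u v hadj).1 (hSA hu')) (hSA hv')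
      · -- u ∈ SA, v ∈ SB : v has no neighbor in SA
        have hvB := hSB hv'
        rw [hGooddef, Finset.mem_filter] at hvB
        have : u ∈ SA ∩ G.neighborFinset v := Finset.mem_inter.2
          ⟨hu', (SimpleGraph.mem_neighborFinset _ _ _).2 hadj.symm⟩
        rw [hvB.2] at this
        exact absurd this (Finset.notMem_empty u)
      · have huB := hSB hu'
        rw [hGooddef, Finset.mem_filter] at huB
        have : v ∈ SA ∩ G.neighborFinset u := Finset.mem_inter.2
          ⟨hv', (SimpleGraph.mem_neighborFinset _ _ _).2 hadj⟩
        rw [huB.2] at this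
        exact absurd this (Finset.notMem_empty v)
      · have h1 := (hmemB u).1 (hSBB hu')
        have h2 := (hmemB v).1 (hSBB hv')
        exact h1 ((hbip u v hadj).2 h2)
    · intro S hS
      rw [Finset.mem_filter, Finset.mem_powerset] at hS
      simp only [Finset.mem_sigma, Finset.mem_powerset]
      constructor
      · exact Finset.inter_subset_right
      · rw [hGooddef]
        intro v hv
        rw [Finset.mem_sdiff] at hv
        rw [Finset.mem_filter]
        refine ⟨(hmemB v).2 hv.2, ?_⟩
        rw [Finset.eq_empty_iff_forall_notMem]
        intro u hu
        rw [Finset.mem_inter, Finset.mem_inter, SimpleGraph.mem_neighborFinset] at hu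
        exact hS.2 v hv.1 u hu.1.1 hu.2
    · rintro ⟨SA, SB⟩ hp
      simp only [Finset.mem_sigma, Finset.mem_powerset] at hp
      obtain ⟨hSA, hSB⟩ := hp
      have hSBB : SB ⊆ B := hSB.trans (Finset.filter_subset _ _)
      have hdisj1 : ∀ x ∈ SB, x ∉ A := fun x hx => (hmemB x).1 (hSBB hx)
      have e1 : (SA ∪ SB) ∩ A = SA := by
        ext x
        simp only [Finset.mem_inter, Finset.mem_union]
        constructor
        · rintro ⟨h1 | h1, h2⟩
          · exact h1
          · exact absurd h2 (hdisj1 x h1)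
        · intro h; exact ⟨Or.inl h, hSA h⟩
      have e2 : (SA ∪ SB) \ A = SB := by
        ext x
        simp only [Finset.mem_sdiff, Finset.mem_union]
        constructor
        · rintro ⟨h1 | h1, h2⟩
          · exact absurd (hSA h1) h2
          · exact h1
        · intro h; exact ⟨Or.inr h, hdisj1 x h⟩
      simp only [e1, e2]
    · intro S hS
      simp only
      rw [Finset.union_comm, Finset.sdiff_union_inter]
    · rintro ⟨SA, SB⟩ hp
      simp only [Finset.mem_sigma, Finset.mem_powerset] at hp
      obtain ⟨hSA, hSB⟩ := hp
      have hSBB : SB ⊆ B := hSB.trans (Finset.filter_subset _ _)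
      have hdisj : Disjoint SA SB := by
        rw [Finset.disjoint_left]
        intro x hx hx2
        exact (hmemB x).1 (hSBB hx2) (hSA hx)
      rw [Finset.card_union_of_disjoint hdisj]
  -- hypotheses for finner
  have hD : ∀ k, D k ⊆ A := by
    intro k
    rw [hDdef]
    dsimp only
    by_cases hk : k ∈ B
    · rw [if_pos hk]; exact hNB k hk
    · rw [if_neg hk]; exact Finset.empty_subset _
  have hdep : ∀ k (S : Finset V), S ⊆ A → F k (S ∩ D k) = F k S := by
    intro k S _
    by_cases hk : k ∈ B
    · simp only [hFdef, hDdef, hfdef, if_pos hk]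
      rw [Finset.inter_assoc, Finset.inter_self]
    · simp only [hFdef, if_neg hk]
  have hcov : ∀ i : V, (Finset.univ.filter fun k => i ∈ D k).card ≤ d := by
    intro i
    have hsub : (Finset.univ.filter fun k => i ∈ D k) ⊆ G.neighborFinset i := by
      intro k hk
      have h2 := (Finset.mem_filter.1 hk).2
      rw [hDdef] at h2
      dsimp only at h2
      by_cases hkB : k ∈ B
      · rw [if_pos hkB] at h2
        rw [SimpleGraph.mem_neighborFinset] at h2 ⊢
        exact h2.symm
      · rw [if_neg hkB] at h2
        exact absurd h2 (Finset.notMem_empty i)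
    exact le_trans (Finset.card_le_card hsub) (le_of_eq (hdeg i))
  have hFprod : ∀ SA : Finset V, ∏ k, F k SA = ∏ v ∈ B, f v SA := by
    intro SA
    have : ∀ k : V, F k SA = if k ∈ B then f k SA else 1 := fun k => by rw [hFdef]
    rw [Finset.prod_congr rfl (fun k _ => this k), ← Finset.prod_filter]
    congr 1
    ext k
    simp
  -- bound on each factor
  have hE : ∀ k : V, (∑ SA ∈ A.powerset, mu w₀ w₁ A SA * (F k SA) ^ d)
      ≤ (if k ∈ B then 2 else 1) := by
    intro k
    by_cases hk : k ∈ B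
    · rw [if_pos hk]
      have hpow : ∀ SA : Finset V, (F k SA) ^ d
          = if SA ∩ G.neighborFinset k = ∅ then (1 + ν) ^ d else 1 := by
        intro SA
        rw [hFdef]
        dsimp only
        rw [if_pos hk, hfdef]
        dsimp only
        split
        · rfl
        · exact one_pow d
      rw [Finset.sum_congr rfl (fun SA _ => by rw [hpow SA])]
      rw [← Finset.sum_filter_add_sum_filter_not A.powerset
        (fun SA => SA ∩ G.neighborFinset k = ∅)]
      have e1 : ∑ SA ∈ A.powerset.filter (fun SA => SA ∩ G.neighborFinset k = ∅),
          mu w₀ w₁ A SA * (if SA ∩ G.neighborFinset k = ∅ then (1 + ν) ^ d else 1) = 1 := by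
        rw [Finset.sum_congr rfl (fun SA hSA => by
          rw [if_pos (Finset.mem_filter.1 hSA).2])]
        rw [← Finset.sum_mul, mu_disjoint_sum w₀ w₁ hw A (G.neighborFinset k) (hNB k hk)]
        rw [hw₀]
        rw [Finset.prod_const, hdeg k, ← mul_pow, inv_mul_cancel₀ h1ν, one_pow]
      have e2 : ∑ SA ∈ A.powerset.filter (fun SA => ¬ SA ∩ G.neighborFinset k = ∅),
          mu w₀ w₁ A SA * (if SA ∩ G.neighborFinset k = ∅ then (1 + ν) ^ d else 1) ≤ 1 := by
        rw [Finset.sum_congr rfl (fun SA hSA => by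
          rw [if_neg (Finset.mem_filter.1 hSA).2, mul_one])]
        calc ∑ SA ∈ A.powerset.filter (fun SA => ¬ SA ∩ G.neighborFinset k = ∅), mu w₀ w₁ A SA
            ≤ ∑ SA ∈ A.powerset, mu w₀ w₁ A SA :=
              Finset.sum_le_sum_of_subset (Finset.filter_subset _ _)
          _ = 1 := mu_total w₀ w₁ hw A
      calc _ ≤ (1 : NNReal) + 1 := add_le_add (le_of_eq e1) e2
        _ = 2 := one_add_one_eq_two
    · rw [if_neg hk]
      have hFone : ∀ SA : Finset V, F k SA = 1 := by
        intro SA; rw [hFdef]; dsimp only; rw [if_neg hk]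
      apply le_of_eq
      rw [Finset.sum_congr rfl (fun SA _ => by rw [hFone SA, one_pow, mul_one])]
      exact mu_total w₀ w₁ hw A
  -- assemble
  rw [hZrep]
  calc ∑ SA ∈ A.powerset, ν ^ SA.card * ∏ v ∈ B, f v SA
      = (1 + ν) ^ A.card * ∑ SA ∈ A.powerset, mu w₀ w₁ A SA * ∏ k, F k SA := by
        rw [Finset.mul_sum]
        apply Finset.sum_congr rfl
        intro SA hSA
        rw [hFprod SA, ← hmuA SA hSA]
        ring
    _ ≤ (1 + ν) ^ A.card *
        ∏ k, (∑ SA ∈ A.powerset, mu w₀ w₁ A SA * (F k SA) ^ d) ^ ((d : ℝ)⁻¹) := by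
        exact mul_le_mul_right (finner d hd w₀ w₁ hw A F D hD hdep hcov) _
    _ ≤ (1 + ν) ^ A.card * 2 ^ ((B.card : ℝ) / d) := by
        apply mul_le_mul_right
        calc ∏ k, (∑ SA ∈ A.powerset, mu w₀ w₁ A SA * (F k SA) ^ d) ^ ((d : ℝ)⁻¹)
            ≤ ∏ k, ((if k ∈ B then 2 else 1 : NNReal)) ^ ((d : ℝ)⁻¹) :=
              Finset.prod_le_prod' (fun k _ => NNReal.rpow_le_rpow (hE k) (by positivity))
          _ = ∏ k, (if k ∈ B then ((2 : NNReal) ^ ((d : ℝ)⁻¹)) else 1) := by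
              apply Finset.prod_congr rfl
              intro k _
              rw [apply_ite (fun x : NNReal => x ^ ((d : ℝ)⁻¹)), NNReal.one_rpow]
          _ = ∏ k ∈ Finset.univ.filter (fun k => k ∈ B), (2 : NNReal) ^ ((d : ℝ)⁻¹) := by
              rw [Finset.prod_filter]
          _ = ((2 : NNReal) ^ ((d : ℝ)⁻¹)) ^ B.card := by
              rw [Finset.prod_const]
              congr 1
              rw [Finset.filter_univ_mem]
          _ = 2 ^ ((B.card : ℝ) / d) := by
              rw [← NNReal.rpow_natCast ((2 : NNReal) ^ ((d : ℝ)⁻¹)) B.card,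
                ← NNReal.rpow_mul]
              congr 1
              field_simp

lemma binom_term_le (n t : ℕ) (ht0 : 0 < t) (htn : t < n) :
    ∀ k, n.choose k * t ^ k * (n - t) ^ (n - k) ≤ n.choose t * t ^ t * (n - t) ^ (n - t) := by
  set b : ℕ → ℕ := fun k => n.choose k * t ^ k * (n - t) ^ (n - k) with hbdef
  have hnt0 : 0 < n - t := Nat.sub_pos_of_lt htn
  have hid : ∀ k, k < n → b (k + 1) * ((k + 1) * (n - t)) = b k * ((n - k) * t) := by
    intro k hk
    have h1 : n.choose (k + 1) * (k + 1) = n.choose k * (n - k) := Nat.choose_succ_right_eq n k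
    have h2 : (n - t) ^ (n - (k + 1)) * (n - t) = (n - t) ^ (n - k) := by
      rw [← pow_succ]
      congr 1
      omega
    calc b (k + 1) * ((k + 1) * (n - t))
        = (n.choose (k + 1) * (k + 1)) * (t ^ (k + 1) * ((n - t) ^ (n - (k + 1)) * (n - t))) := by
          rw [hbdef]; ring
      _ = (n.choose k * (n - k)) * (t ^ (k + 1) * (n - t) ^ (n - k)) := by rw [h1, h2]
      _ = b k * ((n - k) * t) := by rw [hbdef, pow_succ]; ring
  have hup : ∀ k, k < t → b k ≤ b (k + 1) := by
    intro k hk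
    have hkn : k < n := lt_trans hk htn
    have hineq : (k + 1) * (n - t) ≤ (n - k) * t := by
      have h1 : k + 1 ≤ t := hk
      have h2 : n - t ≤ n - k := Nat.sub_le_sub_left (le_of_lt hk) n
      calc (k + 1) * (n - t) ≤ t * (n - k) := Nat.mul_le_mul h1 h2
        _ = (n - k) * t := Nat.mul_comm _ _
    have hX : 0 < (k + 1) * (n - t) := Nat.mul_pos (Nat.succ_pos k) hnt0
    have : b k * ((k + 1) * (n - t)) ≤ b (k + 1) * ((k + 1) * (n - t)) := by
      rw [hid k hkn]
      exact Nat.mul_le_mul_left _ hineq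
    exact Nat.le_of_mul_le_mul_right this hX
  have hdown : ∀ k, t ≤ k → b (k + 1) ≤ b k := by
    intro k hk
    by_cases hkn : k < n
    · have hineq : (n - k) * t ≤ (k + 1) * (n - t) := by
        have h1 : n - k ≤ n - t := Nat.sub_le_sub_left hk n
        have h2 : t ≤ k + 1 := le_trans hk (Nat.le_succ k)
        calc (n - k) * t ≤ (n - t) * (k + 1) := Nat.mul_le_mul h1 h2
          _ = (k + 1) * (n - t) := Nat.mul_comm _ _
      have hX : 0 < (k + 1) * (n - t) := Nat.mul_pos (Nat.succ_pos k) hnt0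
      have : b (k + 1) * ((k + 1) * (n - t)) ≤ b k * ((k + 1) * (n - t)) := by
        rw [hid k hkn]
        exact Nat.mul_le_mul_left _ hineq
      exact Nat.le_of_mul_le_mul_right this hX
    · have : n.choose (k + 1) = 0 := Nat.choose_eq_zero_of_lt (by omega)
      rw [hbdef]
      simp [this]
  have hbelow : ∀ j, b (t - j) ≤ b t := by
    intro j
    induction j with
    | zero => simp
    | succ j ih =>
      by_cases hj : t ≤ j
      · rw [show t - (j + 1) = t - j from by omega]
        exact ih
      · push_neg at hj
        have h1 : t - (j + 1) < t := by omega
        have h2 : t - (j + 1) + 1 = t - j := by omega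
        calc b (t - (j + 1)) ≤ b (t - (j + 1) + 1) := hup _ h1
          _ = b (t - j) := by rw [h2]
          _ ≤ b t := ih
  have habove : ∀ j, b (t + j) ≤ b t := by
    intro j
    induction j with
    | zero => simp
    | succ j ih =>
      calc b (t + (j + 1)) = b ((t + j) + 1) := by rw [Nat.add_assoc]
        _ ≤ b (t + j) := hdown _ (Nat.le_add_right t j)
        _ ≤ b t := ih
  intro k
  by_cases hk : k ≤ t
  · have := hbelow (t - k)
    rwa [show t - (t - k) = k from by omega] at this
  · push_neg at hk
    have := habove (k - t)
    rwa [show t + (k - t) = k from by omega] at this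

lemma binom_sum (n t : ℕ) (ht0 : 0 < t) (htn : t < n) :
    n ^ n ≤ (n + 1) * (n.choose t * t ^ t * (n - t) ^ (n - t)) := by
  have hbin := add_pow (R := ℕ) t (n - t) n
  rw [Nat.add_sub_cancel' (le_of_lt htn)] at hbin
  rw [hbin]
  have : ∀ k ∈ Finset.range (n + 1),
      t ^ k * (n - t) ^ (n - k) * n.choose k ≤ n.choose t * t ^ t * (n - t) ^ (n - t) := by
    intro k _
    calc t ^ k * (n - t) ^ (n - k) * n.choose k = n.choose k * t ^ k * (n - t) ^ (n - k) := by ring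
      _ ≤ _ := binom_term_le n t ht0 htn k
  calc ∑ k ∈ Finset.range (n + 1), t ^ k * (n - t) ^ (n - k) * n.choose k
      ≤ (Finset.range (n + 1)).card • (n.choose t * t ^ t * (n - t) ^ (n - t)) :=
        Finset.sum_le_card_nsmul _ _ _ this
    _ = (n + 1) * (n.choose t * t ^ t * (n - t) ^ (n - t)) := by
        rw [Finset.card_range, smul_eq_mul]

lemma sides {V : Type} [Fintype V] [DecidableEq V] (G : SimpleGraph V) [DecidableRel G.Adj]
    (n d : ℕ) (hd : 0 < d) (A : Finset V) (hcard : Fintype.card V = 2 * n)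
    (hreg : G.IsRegularOfDegree d)
    (hbip : ∀ u v : V, G.Adj u v → (u ∈ A ↔ v ∉ A)) :
    A.card = n ∧ (Aᶜ : Finset V).card = n := by
  classical
  have hrow : ∀ u ∈ A, ((Aᶜ : Finset V).filter (fun v => G.Adj u v)).card = d := by
    intro u hu
    have : (Aᶜ : Finset V).filter (fun v => G.Adj u v) = G.neighborFinset u := by
      ext v
      simp only [Finset.mem_filter, Finset.mem_compl, SimpleGraph.mem_neighborFinset]
      constructor
      · rintro ⟨_, h⟩; exact h
      · intro h; exact ⟨(hbip u v h).1 hu, h⟩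
    rw [this]
    exact hreg u
  have hcol : ∀ v ∈ (Aᶜ : Finset V), (A.filter (fun u => G.Adj u v)).card = d := by
    intro v hv
    rw [Finset.mem_compl] at hv
    have : A.filter (fun u => G.Adj u v) = G.neighborFinset v := by
      ext u
      simp only [Finset.mem_filter, SimpleGraph.mem_neighborFinset]
      constructor
      · rintro ⟨_, h⟩; exact h.symm
      · intro h
        refine ⟨?_, h.symm⟩
        by_contra huA
        exact hv ((hbip v u h).2 huA)
    rw [this]
    exact hreg v
  have hdouble : d * A.card = d * (Aᶜ : Finset V).card := by
    have h1 : ∑ u ∈ A, ∑ v ∈ (Aᶜ : Finset V), (if G.Adj u v then 1 else 0) = d * A.card := by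
      calc ∑ u ∈ A, ∑ v ∈ (Aᶜ : Finset V), (if G.Adj u v then 1 else 0)
          = ∑ _u ∈ A, d :=
            Finset.sum_congr rfl (fun u hu => by rw [← Finset.card_filter]; exact hrow u hu)
        _ = d * A.card := by rw [Finset.sum_const, smul_eq_mul, mul_comm]
    have h2 : ∑ u ∈ A, ∑ v ∈ (Aᶜ : Finset V), (if G.Adj u v then 1 else 0)
        = d * (Aᶜ : Finset V).card := by
      rw [Finset.sum_comm]
      calc ∑ v ∈ (Aᶜ : Finset V), ∑ u ∈ A, (if G.Adj u v then 1 else 0)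
          = ∑ _v ∈ (Aᶜ : Finset V), d :=
            Finset.sum_congr rfl (fun v hv => by rw [← Finset.card_filter]; exact hcol v hv)
        _ = d * (Aᶜ : Finset V).card := by rw [Finset.sum_const, smul_eq_mul, mul_comm]
    rw [← h1, h2]
  have heq : A.card = (Aᶜ : Finset V).card := Nat.eq_of_mul_eq_mul_left hd hdouble
  have hsum : A.card + (Aᶜ : Finset V).card = 2 * n := by
    rw [Finset.card_add_card_compl, hcard]
  omega

lemma d_le_n {V : Type} [Fintype V] [DecidableEq V] (G : SimpleGraph V) [DecidableRel G.Adj]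
    (n d : ℕ) (hn : 0 < n) (A : Finset V)
    (hreg : G.IsRegularOfDegree d)
    (hbip : ∀ u v : V, G.Adj u v → (u ∈ A ↔ v ∉ A))
    (hA : A.card = n) (hB : (Aᶜ : Finset V).card = n) : d ≤ n := by
  have : 0 < A.card := hA ▸ hn
  obtain ⟨u, hu⟩ := Finset.card_pos.1 this
  have hsub : G.neighborFinset u ⊆ (Aᶜ : Finset V) := by
    intro v hv
    rw [SimpleGraph.mem_neighborFinset] at hv
    rw [Finset.mem_compl]
    exact (hbip u v hv).1 hu
  calc d = (G.neighborFinset u).card := (hreg u).symm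
    _ ≤ (Aᶜ : Finset V).card := Finset.card_le_card hsub
    _ = n := hB

lemma binom_real (n t : ℕ) (ht0 : 0 < t) (htn : t < n) :
    ((n : ℝ) / ((n : ℝ) - t)) ^ n ≤ ((n : ℝ) + 1) * (n.choose t) * ((t : ℝ) / ((n : ℝ) - t)) ^ t := by
  have hnt : (0 : ℝ) < (n : ℝ) - t := by
    have := htn
    push_cast
    have : (t:ℝ) < n := by exact_mod_cast htn
    linarith
  have key : (n : ℝ) ^ n ≤ ((n : ℝ) + 1) * (n.choose t) * (t : ℝ) ^ t * ((n : ℝ) - t) ^ (n - t) := by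
    have h := binom_sum n t ht0 htn
    have hcast : ((n ^ n : ℕ) : ℝ) ≤ (((n + 1) * (n.choose t * t ^ t * (n - t) ^ (n - t)) : ℕ) : ℝ) := by
      exact_mod_cast h
    push_cast [Nat.cast_sub (le_of_lt htn)] at hcast
    linarith [hcast]
  rw [div_pow, div_pow, div_le_iff₀ (by positivity : (0:ℝ) < ((n:ℝ) - t) ^ n)]
  have hsplit : ((n:ℝ) - t) ^ n = ((n:ℝ) - t) ^ t * ((n:ℝ) - t) ^ (n - t) := by
    rw [← pow_add]
    congr 1
    omega
  rw [hsplit]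
  have hne : ((n:ℝ) - t) ^ t ≠ 0 := by positivity
  calc (n:ℝ) ^ n ≤ ((n : ℝ) + 1) * (n.choose t) * (t : ℝ) ^ t * ((n : ℝ) - t) ^ (n - t) := key
    _ = ((n:ℝ) + 1) * (n.choose t) * ((t:ℝ) ^ t / ((n:ℝ) - t) ^ t)
        * (((n:ℝ) - t) ^ t * ((n:ℝ) - t) ^ (n - t)) := by
        field_simp
  done

lemma gap_exp (ρ : ℝ) (hρ : 1 < ρ) (n d i j : ℕ) (hd : 0 < d) (hdn : d ≤ n)
    (hij : i ≤ j)
    (hs : (3 / Real.logb 2 ρ + 1) * max (Real.logb 2 n) ((n : ℝ) / d) ≤ (j : ℝ) - i) :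
    ((n : ℝ) + 1) * 2 ^ ((n : ℝ) / d) ≤ ρ ^ (j - i) := by
  set c := Real.logb 2 ρ with hcdef
  have hc : 0 < c := Real.logb_pos one_lt_two hρ
  have hn1 : 1 ≤ n := le_trans hd hdn
  have hdr : (0:ℝ) < d := by exact_mod_cast hd
  have hnr : (1:ℝ) ≤ n := by exact_mod_cast hn1
  have hnd1 : (1 : ℝ) ≤ (n : ℝ) / d := by
    rw [le_div_iff₀ hdr, one_mul]
    exact_mod_cast hdn
  set M := max (Real.logb 2 n) ((n : ℝ) / d) with hMdef
  have hM1 : 1 ≤ M := le_trans hnd1 (le_max_right _ _)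
  have hMlog : Real.logb 2 n ≤ M := le_max_left _ _
  have hMd : (n : ℝ) / d ≤ M := le_max_right _ _
  have hlog : Real.logb 2 ((n : ℝ) + 1) ≤ 1 + Real.logb 2 n := by
    have h2n : ((n : ℝ) + 1) ≤ 2 * n := by linarith
    calc Real.logb 2 ((n : ℝ) + 1) ≤ Real.logb 2 (2 * n) :=
          Real.logb_le_logb_of_le one_lt_two (by positivity) h2n
      _ = Real.logb 2 2 + Real.logb 2 n := Real.logb_mul (by norm_num) (by positivity)
      _ = 1 + Real.logb 2 n := by rw [Real.logb_self_eq_one one_lt_two]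
  have h3M : Real.logb 2 ((n : ℝ) + 1) + (n : ℝ) / d ≤ 3 * M := by linarith
  have hcs : 3 * M ≤ c * ((j : ℝ) - i) := by
    have h1 := mul_le_mul_of_nonneg_left hs (le_of_lt hc)
    have hexp : c * ((3 / c + 1) * M) = 3 * M + c * M := by
      field_simp
    nlinarith [hc, hM1]
  have hρpos : 0 < ρ := lt_trans one_pos hρ
  calc ((n : ℝ) + 1) * 2 ^ ((n : ℝ) / d)
      = 2 ^ (Real.logb 2 ((n : ℝ) + 1)) * 2 ^ ((n : ℝ) / d) := by
        rw [Real.rpow_logb two_pos (by norm_num) (by positivity)]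
    _ = 2 ^ (Real.logb 2 ((n : ℝ) + 1) + (n : ℝ) / d) := (Real.rpow_add two_pos _ _).symm
    _ ≤ 2 ^ (c * ((j : ℝ) - i)) :=
        Real.rpow_le_rpow_of_exponent_le one_le_two (le_trans h3M hcs)
    _ = 2 ^ (c * ((j - i : ℕ) : ℝ)) := by rw [Nat.cast_sub hij]
    _ = (2 ^ c) ^ ((j - i : ℕ) : ℝ) := Real.rpow_mul (by norm_num) _ _
    _ = ρ ^ ((j - i : ℕ) : ℝ) := by rw [hcdef, Real.rpow_logb two_pos (by norm_num) hρpos]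
    _ = ρ ^ (j - i) := Real.rpow_natCast ρ (j - i)

lemma numIndep_lower {V : Type} [Fintype V] [DecidableEq V] (G : SimpleGraph V)
    [DecidableRel G.Adj] (A : Finset V)
    (hbip : ∀ u v : V, G.Adj u v → (u ∈ A ↔ v ∉ A)) (t : ℕ) :
    A.card.choose t ≤ numIndep G t := by
  rw [numIndep, ← Finset.card_powersetCard]
  apply Finset.card_le_card
  intro S hS
  rw [Finset.mem_powersetCard] at hS
  rw [Finset.mem_filter, Finset.mem_powerset]
  exact ⟨Finset.subset_univ S, hS.2,
    fun u hu v hv hadj => ((hbip u v hadj).1 (hS.1 hu)) (hS.1 hv)⟩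

lemma numIndep_upper {V : Type} [Fintype V] [DecidableEq V] (G : SimpleGraph V)
    [DecidableRel G.Adj] (n d : ℕ) (hd : 0 < d) (A : Finset V)
    (hreg : G.IsRegularOfDegree d)
    (hbip : ∀ u v : V, G.Adj u v → (u ∈ A ↔ v ∉ A))
    (hA : A.card = n) (hB : (Aᶜ : Finset V).card = n) (t : ℕ) (x : ℝ) (hx : 0 ≤ x) :
    (numIndep G t : ℝ) * x ^ t ≤ (1 + x) ^ n * 2 ^ ((n : ℝ) / d) := by
  set ν := Real.toNNReal x with hνdef
  have step1 : (numIndep G t : NNReal) * ν ^ t ≤ (1 + ν) ^ n * 2 ^ ((n : ℝ) / d) := by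
    calc (numIndep G t : NNReal) * ν ^ t
        = ∑ S ∈ Finset.univ.powerset.filter
            (fun s : Finset V => s.card = t ∧ ∀ u ∈ s, ∀ v ∈ s, ¬ G.Adj u v), ν ^ S.card := by
          rw [Finset.sum_congr rfl
            (fun S hS => by rw [(Finset.mem_filter.1 hS).2.1] : ∀ S ∈ Finset.univ.powerset.filter
              (fun s : Finset V => s.card = t ∧ ∀ u ∈ s, ∀ v ∈ s, ¬ G.Adj u v),
                ν ^ S.card = ν ^ t)]
          rw [Finset.sum_const, nsmul_eq_mul, numIndep]
      _ ≤ ∑ S ∈ Finset.univ.powerset.filter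
            (fun s : Finset V => ∀ u ∈ s, ∀ v ∈ s, ¬ G.Adj u v), ν ^ S.card := by
          apply Finset.sum_le_sum_of_subset
          intro S hS
          rw [Finset.mem_filter] at hS ⊢
          exact ⟨hS.1, hS.2.2⟩
      _ ≤ (1 + ν) ^ A.card * 2 ^ (((Aᶜ : Finset V).card : ℝ) / d) :=
          kahn G d hd A hreg hbip ν
      _ = (1 + ν) ^ n * 2 ^ ((n : ℝ) / d) := by rw [hA, hB]
  have step2 := NNReal.coe_le_coe.2 step1
  push_cast at step2
  rwa [Real.coe_toNNReal x hx] at step2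


end Stmt6Aux


theorem stmt_6 (ε : ℝ) (hε : 0 < ε) :
    ∃ C : ℝ, 0 < C ∧
      ∀ (V : Type) (_ : Fintype V) (_ : DecidableEq V) (G : SimpleGraph V)
        (_ : DecidableRel G.Adj) (n d : ℕ) (A : Finset V),
        Fintype.card V = 2 * n → 0 < d → G.IsRegularOfDegree d →
        (∀ u v : V, G.Adj u v → (u ∈ A ↔ v ∉ A)) →
        (∀ i j : ℕ, i ≤ j → (j : ℝ) ≤ (1 - ε) * n / 2 →
            C * max (Real.logb 2 n) ((n : ℝ) / d) ≤ (j : ℝ) - (i : ℝ) →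
            (numIndep G i : ℝ) ≤ numIndep G j) ∧
        (∀ i j : ℕ, (1 + ε) * n / 2 ≤ (i : ℝ) → i ≤ j → j ≤ n →
            C * max (Real.logb 2 n) ((n : ℝ) / d) ≤ (j : ℝ) - (i : ℝ) →
            (numIndep G j : ℝ) ≤ numIndep G i) := by
  classical
  set ε' : ℝ := min ε (1 / 2) with hε'def
  have hε'pos : 0 < ε' := lt_min hε (by norm_num)
  have hε'le : ε' ≤ ε := min_le_left _ _
  have hε'half : ε' ≤ 1 / 2 := min_le_right _ _
  have h1ε' : (0 : ℝ) < 1 - ε' := by linarith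
  set ρ : ℝ := (1 + ε') / (1 - ε') with hρdef
  have hρ1 : 1 < ρ := by rw [hρdef, lt_div_iff₀ h1ε']; linarith
  have hρpos : 0 < ρ := lt_trans one_pos hρ1
  set c : ℝ := Real.logb 2 ρ with hcdef
  have hc : 0 < c := Real.logb_pos one_lt_two hρ1
  refine ⟨3 / c + 1, by positivity, ?_⟩
  intro V _ _ G _ n d A hcard hd hreg hbip
  obtain ⟨hA, hB⟩ := Stmt6Aux.sides G n d hd A hcard hreg hbip
  constructor
  · -- increasing part
    intro i j hij hjle hgap
    rcases eq_or_lt_of_le hij with rfl | hlt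
    · exact le_refl _
    have hj1 : 1 ≤ j := by omega
    have hjr1 : (1 : ℝ) ≤ (j : ℝ) := by exact_mod_cast hj1
    have hn1 : 1 ≤ n := by
      by_contra h
      push_neg at h
      have hn0 : n = 0 := by omega
      rw [hn0] at hjle
      norm_num at hjle
      linarith
    have hnr1 : (1 : ℝ) ≤ (n : ℝ) := by exact_mod_cast hn1
    have hdn : d ≤ n := Stmt6Aux.d_le_n G n d (by omega) A hreg hbip hA hB
    have hjε' : (j : ℝ) ≤ (1 - ε') * n / 2 := by
      refine le_trans hjle ?_
      have : (1 - ε) * n ≤ (1 - ε') * n := by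
        apply mul_le_mul_of_nonneg_right (by linarith) (by positivity)
      linarith
    have hjn : j < n := by
      have h1 : (j : ℝ) < (n : ℝ) := by nlinarith
      exact_mod_cast h1
    set lam : ℝ := (j : ℝ) / ((n : ℝ) - j) with hlamdef
    have hntj : (0 : ℝ) < (n : ℝ) - j := by
      have : (j : ℝ) < (n : ℝ) := by exact_mod_cast hjn
      linarith
    have hjr : (0 : ℝ) < (j : ℝ) := by linarith
    have hlampos : 0 < lam := div_pos hjr hntj
    have hkey1 : ρ * lam ≤ 1 := by
      rw [hρdef, hlamdef, div_mul_div_comm, div_le_one (by positivity)]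
      nlinarith
    have hgap2 : ((n : ℝ) + 1) * 2 ^ ((n : ℝ) / d) ≤ ρ ^ (j - i) :=
      Stmt6Aux.gap_exp ρ hρ1 n d i j hd hdn hij hgap
    have hup := Stmt6Aux.numIndep_upper G n d hd A hreg hbip hA hB i lam hlampos.le
    have h1lam : 1 + lam = (n : ℝ) / ((n : ℝ) - j) := by
      rw [hlamdef]
      field_simp
      ring
    have hbr := Stmt6Aux.binom_real n j hj1 hjn
    have hlow : ((n.choose j : ℝ)) ≤ (numIndep G j : ℝ) := by
      have := Stmt6Aux.numIndep_lower G A hbip j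
      rw [hA] at this
      exact_mod_cast this
    have hsplit : (numIndep G i : ℝ) * lam ^ j = ((numIndep G i : ℝ) * lam ^ i) * lam ^ (j - i) := by
      rw [mul_assoc, ← pow_add]
      congr 2
      omega
    have step1 : (numIndep G i : ℝ) * lam ^ j
        ≤ ((1 + lam) ^ n * 2 ^ ((n : ℝ) / d)) * lam ^ (j - i) := by
      rw [hsplit]
      exact mul_le_mul_of_nonneg_right hup (by positivity)
    have step2 : ((1 + lam) ^ n * 2 ^ ((n : ℝ) / d)) * lam ^ (j - i)
        ≤ (1 + lam) ^ n / ((n : ℝ) + 1) := by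
      have hρlam : ρ ^ (j - i) * lam ^ (j - i) ≤ 1 := by
        rw [← mul_pow]
        exact pow_le_one₀ (by positivity) hkey1
      have h2 : ((n : ℝ) + 1) * 2 ^ ((n : ℝ) / d) * lam ^ (j - i) ≤ 1 := by
        calc ((n : ℝ) + 1) * 2 ^ ((n : ℝ) / d) * lam ^ (j - i)
            ≤ ρ ^ (j - i) * lam ^ (j - i) :=
              mul_le_mul_of_nonneg_right hgap2 (by positivity)
          _ ≤ 1 := hρlam
      rw [le_div_iff₀ (by positivity : (0 : ℝ) < (n : ℝ) + 1)]
      calc (1 + lam) ^ n * 2 ^ ((n : ℝ) / d) * lam ^ (j - i) * ((n : ℝ) + 1)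
          = (1 + lam) ^ n * (((n : ℝ) + 1) * 2 ^ ((n : ℝ) / d) * lam ^ (j - i)) := by ring
        _ ≤ (1 + lam) ^ n * 1 := mul_le_mul_of_nonneg_left h2 (by positivity)
        _ = (1 + lam) ^ n := mul_one _
    have step3 : (1 + lam) ^ n / ((n : ℝ) + 1) ≤ (n.choose j : ℝ) * lam ^ j := by
      rw [div_le_iff₀ (by positivity : (0 : ℝ) < (n : ℝ) + 1), h1lam]
      calc ((n : ℝ) / ((n : ℝ) - j)) ^ n
          ≤ ((n : ℝ) + 1) * (n.choose j) * ((j : ℝ) / ((n : ℝ) - j)) ^ j := hbr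
        _ = (n.choose j : ℝ) * lam ^ j * ((n : ℝ) + 1) := by rw [hlamdef]; ring
    have final : (numIndep G i : ℝ) * lam ^ j ≤ (numIndep G j : ℝ) * lam ^ j :=
      calc (numIndep G i : ℝ) * lam ^ j ≤ (n.choose j : ℝ) * lam ^ j :=
            le_trans step1 (le_trans step2 step3)
        _ ≤ (numIndep G j : ℝ) * lam ^ j :=
            mul_le_mul_of_nonneg_right hlow (by positivity)
    exact le_of_mul_le_mul_right final (by positivity : (0 : ℝ) < lam ^ j)
  · -- decreasing part
    intro i j hile hij hjn hgap
    rcases eq_or_lt_of_le hij with rfl | hlt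
    · exact le_refl _
    have hj1 : 1 ≤ j := by omega
    have hn1 : 1 ≤ n := le_trans hj1 hjn
    have hnr1 : (1 : ℝ) ≤ (n : ℝ) := by exact_mod_cast hn1
    have hdn : d ≤ n := Stmt6Aux.d_le_n G n d (by omega) A hreg hbip hA hB
    have hiε' : (1 + ε') * n / 2 ≤ (i : ℝ) := by
      refine le_trans ?_ hile
      have : (1 + ε') * n ≤ (1 + ε) * n := by
        apply mul_le_mul_of_nonneg_right (by linarith) (by positivity)
      linarith
    have hi1 : 1 ≤ i := by
      by_contra h
      push_neg at h
      have hi0 : i = 0 := by omega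
      rw [hi0] at hiε'
      norm_num at hiε'
      nlinarith
    have hin : i < n := lt_of_lt_of_le hlt hjn
    set lam : ℝ := (i : ℝ) / ((n : ℝ) - i) with hlamdef
    have hnti : (0 : ℝ) < (n : ℝ) - i := by
      have : (i : ℝ) < (n : ℝ) := by exact_mod_cast hin
      linarith
    have hir : (0 : ℝ) < (i : ℝ) := by
      have : (1 : ℝ) ≤ (i : ℝ) := by exact_mod_cast hi1
      linarith
    have hlampos : 0 < lam := div_pos hir hnti
    have hρlam : ρ ≤ lam := by
      rw [hρdef, hlamdef, div_le_div_iff₀ h1ε' hnti]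
      linarith [hiε']
    have hgap2 : ((n : ℝ) + 1) * 2 ^ ((n : ℝ) / d) ≤ ρ ^ (j - i) :=
      Stmt6Aux.gap_exp ρ hρ1 n d i j hd hdn hij hgap
    have hgap3 : ((n : ℝ) + 1) * 2 ^ ((n : ℝ) / d) ≤ lam ^ (j - i) :=
      le_trans hgap2 (pow_le_pow_left₀ hρpos.le hρlam _)
    have hup := Stmt6Aux.numIndep_upper G n d hd A hreg hbip hA hB j lam hlampos.le
    have h1lam : 1 + lam = (n : ℝ) / ((n : ℝ) - i) := by
      rw [hlamdef]
      field_simp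
      ring
    have hbr := Stmt6Aux.binom_real n i hi1 hin
    have hlow : ((n.choose i : ℝ)) ≤ (numIndep G i : ℝ) := by
      have := Stmt6Aux.numIndep_lower G A hbip i
      rw [hA] at this
      exact_mod_cast this
    have step1 : (numIndep G j : ℝ) * lam ^ j ≤ (1 + lam) ^ n * 2 ^ ((n : ℝ) / d) := hup
    have step2 : (1 + lam) ^ n * 2 ^ ((n : ℝ) / d)
        ≤ ((1 + lam) ^ n / ((n : ℝ) + 1)) * lam ^ (j - i) := by
      rw [div_mul_eq_mul_div, le_div_iff₀ (by positivity : (0 : ℝ) < (n : ℝ) + 1)]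
      calc (1 + lam) ^ n * 2 ^ ((n : ℝ) / d) * ((n : ℝ) + 1)
          = (1 + lam) ^ n * (((n : ℝ) + 1) * 2 ^ ((n : ℝ) / d)) := by ring
        _ ≤ (1 + lam) ^ n * lam ^ (j - i) := mul_le_mul_of_nonneg_left hgap3 (by positivity)
    have step3 : ((1 + lam) ^ n / ((n : ℝ) + 1)) * lam ^ (j - i)
        ≤ ((n.choose i : ℝ) * lam ^ i) * lam ^ (j - i) := by
      apply mul_le_mul_of_nonneg_right ?_ (by positivity)
      rw [div_le_iff₀ (by positivity : (0 : ℝ) < (n : ℝ) + 1), h1lam]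
      calc ((n : ℝ) / ((n : ℝ) - i)) ^ n
          ≤ ((n : ℝ) + 1) * (n.choose i) * ((i : ℝ) / ((n : ℝ) - i)) ^ i := hbr
        _ = (n.choose i : ℝ) * lam ^ i * ((n : ℝ) + 1) := by rw [hlamdef]; ring
    have hsplit : ((n.choose i : ℝ) * lam ^ i) * lam ^ (j - i) = (n.choose i : ℝ) * lam ^ j := by
      rw [mul_assoc, ← pow_add]
      congr 2
      omega
    have final : (numIndep G j : ℝ) * lam ^ j ≤ (numIndep G i : ℝ) * lam ^ j :=
      calc (numIndep G j : ℝ) * lam ^ j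
          ≤ ((n.choose i : ℝ) * lam ^ i) * lam ^ (j - i) :=
            le_trans step1 (le_trans step2 step3)
        _ = (n.choose i : ℝ) * lam ^ j := hsplit
        _ ≤ (numIndep G i : ℝ) * lam ^ j :=
            mul_le_mul_of_nonneg_right hlow (by positivity)
    exact le_of_mul_le_mul_right final (by positivity : (0 : ℝ) < lam ^ j)
end

section
/- Let Q_d be the hypercube on {0,1}^d, with bipartition classes E (even-weight strings) and O (odd-weight strings). For any independent set I of Q_d, at least one of |[I ∩ E]|, |[I ∩ O]| is at most 2^{d−2}, where [A] = {v : N({v}) ⊆ N(A)}. -/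
open Finset

def cube (d : ℕ) : SimpleGraph (Fin d → Bool) where
  Adj x y := (Finset.univ.filter fun i => x i ≠ y i).card = 1
  symm := by
    constructor
    intro x y h
    simpa [ne_comm] using h
  loopless := by
    constructor
    intro x h
    simp at h

instance (d : ℕ) : DecidableRel (cube d).Adj := fun _ _ => by
  unfold cube
  infer_instance

def extNbhd (d : ℕ) (A : Finset (Fin d → Bool)) : Finset (Fin d → Bool) :=
  Finset.univ.filter fun v => v ∉ A ∧ ∃ a ∈ A, (cube d).Adj v a

def closed (d : ℕ) (A : Finset (Fin d → Bool)) : Finset (Fin d → Bool) :=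
  Finset.univ.filter fun v => extNbhd d {v} ⊆ extNbhd d A

def evenWt {d : ℕ} (x : Fin d → Bool) : Prop :=
  (Finset.univ.filter fun i => x i = true).card % 2 = 0

instance {d : ℕ} : DecidablePred (evenWt (d := d)) := fun _ => by
  unfold evenWt
  infer_instance

/-! ### Auxiliary lemmas -/

lemma mem_extNbhd {d : ℕ} {A : Finset (Fin d → Bool)} {v : Fin d → Bool} :
    v ∈ extNbhd d A ↔ v ∉ A ∧ ∃ a ∈ A, (cube d).Adj v a := by
  simp [extNbhd]

lemma mem_closed {d : ℕ} {A : Finset (Fin d → Bool)} {v : Fin d → Bool} :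
    v ∈ closed d A ↔ extNbhd d {v} ⊆ extNbhd d A := by
  simp [closed]

lemma mem_extNbhd_singleton {d : ℕ} {u v : Fin d → Bool} :
    v ∈ extNbhd d {u} ↔ (cube d).Adj v u := by
  rw [mem_extNbhd]
  simp only [Finset.mem_singleton, exists_eq_left]
  constructor
  · exact fun h => h.2
  · exact fun h => ⟨h.ne, h⟩

/-- flip coordinate `j` -/
def flp {d : ℕ} (j : Fin d) (x : Fin d → Bool) : Fin d → Bool :=
  Function.update x j (!x j)

lemma flp_apply {d : ℕ} (j : Fin d) (x : Fin d → Bool) (i : Fin d) :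
    flp j x i = if i = j then !x j else x i := by
  simp [flp, Function.update]

lemma flp_flp {d : ℕ} (j : Fin d) (x : Fin d → Bool) : flp j (flp j x) = x := by
  funext i
  by_cases h : i = j <;> simp [flp_apply, h]

lemma flp_injective {d : ℕ} (j : Fin d) : Function.Injective (flp (d := d) j) :=
  Function.Involutive.injective (flp_flp j)

lemma adj_flp {d : ℕ} (j : Fin d) (x : Fin d → Bool) : (cube d).Adj x (flp j x) := by
  show (Finset.univ.filter fun i => x i ≠ flp j x i).card = 1
  have h : (Finset.univ.filter fun i => x i ≠ flp j x i) = {j} := by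
    ext i
    by_cases hij : i = j
    · subst hij
      simp [flp_apply]
    · simp [flp_apply, hij]
  rw [h, Finset.card_singleton]

lemma adj_evenWt {d : ℕ} {x y : Fin d → Bool} (h : (cube d).Adj x y) :
    evenWt x ↔ ¬ evenWt y := by
  have hcard : (Finset.univ.filter fun i => x i ≠ y i).card = 1 := h
  set S := Finset.univ.filter fun i => x i = true with hS
  set T := Finset.univ.filter fun i => y i = true with hT
  have hsd : (S \ T) ∪ (T \ S) = Finset.univ.filter fun i => x i ≠ y i := by
    ext i
    simp only [Finset.mem_union, Finset.mem_sdiff, hS, hT, Finset.mem_filter,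
      Finset.mem_univ, true_and]
    cases hx : x i <;> cases hy : y i <;> simp
  have h1 : (S \ T).card + (T \ S).card = 1 := by
    rw [← Finset.card_union_of_disjoint disjoint_sdiff_sdiff, hsd]
    exact hcard
  have h2 : (S \ T).card + (S ∩ T).card = S.card := Finset.card_sdiff_add_card_inter S T
  have h3 : (T \ S).card + (T ∩ S).card = T.card := Finset.card_sdiff_add_card_inter T S
  have h4 : (S ∩ T).card = (T ∩ S).card := by rw [Finset.inter_comm]
  show S.card % 2 = 0 ↔ ¬ (T.card % 2 = 0)
  omega

/-- any `a ∈ A` adjacent via the closure gives parity agreement -/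
lemma closed_parity {d : ℕ} (j : Fin d) {A : Finset (Fin d → Bool)} {v : Fin d → Bool}
    (hv : v ∈ closed d A) : ∃ a ∈ A, (evenWt v ↔ evenWt a) := by
  rw [mem_closed] at hv
  have hmem : flp j v ∈ extNbhd d {v} := mem_extNbhd_singleton.2 (adj_flp j v).symm
  obtain ⟨-, a, haA, hadj⟩ := mem_extNbhd.1 (hv hmem)
  refine ⟨a, haA, ?_⟩
  have h1 := adj_evenWt (adj_flp j v)
  have h2 := adj_evenWt hadj
  tauto

lemma no_edge {d : ℕ} {I A B : Finset (Fin d → Bool)}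
    (hI : ∀ u ∈ I, ∀ v ∈ I, ¬ (cube d).Adj u v)
    (hA : A ⊆ I) (hB : B ⊆ I) {u w : Fin d → Bool}
    (hu : u ∈ closed d A) (hw : w ∈ closed d B)
    (hadj : (cube d).Adj u w) : False := by
  rw [mem_closed] at hu hw
  have h1 : u ∈ extNbhd d B := hw (mem_extNbhd_singleton.2 hadj)
  obtain ⟨-, b, hbB, hub⟩ := mem_extNbhd.1 h1
  have h2 : b ∈ extNbhd d A := hu (mem_extNbhd_singleton.2 hub.symm)
  obtain ⟨-, a, haA, hba⟩ := mem_extNbhd.1 h2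
  exact hI b (hB hbB) a (hA haA) hba

lemma card_evenWt {d : ℕ} (j : Fin d) :
    2 * (Finset.univ.filter (evenWt (d := d))).card = 2 ^ d := by
  set E := Finset.univ.filter (evenWt (d := d)) with hE
  set O := Finset.univ.filter (fun x => ¬ evenWt (d := d) x) with hO
  have hmapsEO : ∀ x ∈ E, flp j x ∈ O := by
    intro x hx
    simp only [hE, hO, Finset.mem_filter, Finset.mem_univ, true_and] at *
    have := adj_evenWt (adj_flp j x).symm
    tauto
  have hmapsOE : ∀ x ∈ O, flp j x ∈ E := by
    intro x hx
    simp only [hE, hO, Finset.mem_filter, Finset.mem_univ, true_and] at *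
    have := adj_evenWt (adj_flp j x).symm
    tauto
  have h1 : E.card ≤ O.card :=
    Finset.card_le_card_of_injOn _ hmapsEO (fun a _ b _ h => flp_injective j h)
  have h2 : O.card ≤ E.card :=
    Finset.card_le_card_of_injOn _ hmapsOE (fun a _ b _ h => flp_injective j h)
  have h3 : E.card + O.card = 2 ^ d := by
    rw [hE, hO, Finset.card_filter_add_card_filter_not]
    simp [Finset.card_univ]
  omega

theorem stmt_14 (d : ℕ) (hd : 2 ≤ d) (I : Finset (Fin d → Bool))
    (hI : ∀ u ∈ I, ∀ v ∈ I, ¬ (cube d).Adj u v) :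
    (closed d (I.filter fun x => evenWt x)).card ≤ 2 ^ (d - 2) ∨
    (closed d (I.filter fun x => ¬ evenWt x)).card ≤ 2 ^ (d - 2) := by
  by_contra hcon
  push_neg at hcon
  obtain ⟨hF, hG⟩ := hcon
  have hd0 : 0 < d := by omega
  let j : Fin d := ⟨0, hd0⟩
  set F := closed d (I.filter fun x => evenWt x) with hFdef
  set G := closed d (I.filter fun x => ¬ evenWt x) with hGdef
  -- F consists of even vertices
  have hFeven : ∀ v ∈ F, evenWt v := by
    intro v hv
    obtain ⟨a, haA, hiff⟩ := closed_parity j hv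
    rw [Finset.mem_filter] at haA
    exact hiff.2 haA.2
  have hGodd : ∀ v ∈ G, ¬ evenWt v := by
    intro v hv
    obtain ⟨a, haA, hiff⟩ := closed_parity j hv
    rw [Finset.mem_filter] at haA
    exact fun h => haA.2 (hiff.1 h)
  -- image of G under flp is even, disjoint from F
  set G' := G.image (flp j) with hG'def
  have hG'card : G'.card = G.card := Finset.card_image_of_injective G (flp_injective j)
  have hG'even : ∀ v ∈ G', evenWt v := by
    intro v hv
    obtain ⟨w, hwG, rfl⟩ := Finset.mem_image.1 hv
    have := adj_evenWt (adj_flp j w).symm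
    have := hGodd w hwG
    tauto
  have hdisj : Disjoint F G' := by
    rw [Finset.disjoint_right]
    intro v hvG' hvF
    obtain ⟨w, hwG, rfl⟩ := Finset.mem_image.1 hvG'
    exact no_edge hI (Finset.filter_subset _ I) (Finset.filter_subset _ I) hvF hwG
      (adj_flp j w).symm
  have hsub : F ∪ G' ⊆ Finset.univ.filter (evenWt (d := d)) := by
    intro v hv
    rcases Finset.mem_union.1 hv with h | h
    · simp [hFeven v h]
    · simp [hG'even v h]
  have hcard : F.card + G.card ≤ (Finset.univ.filter (evenWt (d := d))).card := by
    calc F.card + G.card = (F ∪ G').card := by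
          rw [Finset.card_union_of_disjoint hdisj, hG'card]
      _ ≤ _ := Finset.card_le_card hsub
  have h2 : 2 * (Finset.univ.filter (evenWt (d := d))).card = 2 ^ d := card_evenWt j
  have hpow : 2 ^ d = 4 * 2 ^ (d - 2) := by
    have h : 2 ^ d = 2 ^ ((d - 2) + 2) := by congr 1; omega
    rw [h, pow_add]; ring
  omega
end
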